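/- Let u_1, …, u_p > 0 be the frequencies of the unsafe clusters and s_1, …, s_q > 0 the frequencies of the safe clusters, with p ≥ 1, q ≥ 1, and suppose the majority assumption holds in the strong (all-pairs) form: u_i < s_j for every i = 1..p and j = 1..q. Let f : ℝ → ℝ be strictly convex on [0,∞) with f(0) = 0 and f(x) > 0 for all x > 0. Then the unsafe mass under the f-warped normalized sampling distribution is strictly smaller than the raw unsafe fraction: (Σ_i f(u_i)) / (Σ_i f(u_i) + Σ_j f(s_j)) < (Σ_i u_i) / (Σ_i u_i + Σ_j s_j). -/

import Mathlib

/-- Convex Sampling: Unsafe cluster frequencies `u : Fin p → ℝ`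
and safe cluster frequencies `s : Fin q → ℝ`, all positive, with `p, q ≥ 1`
and the all-pairs majority assumption `u i < s j`.  For a strictly convex
warping function `f` on `[0,∞)` with `f 0 = 0` and `f > 0` on `(0,∞)`, the
unsafe mass of the `f`-warped renormalized sampling distribution is strictly
smaller than the raw unsafe fraction. -/
theorem convex_sampling_decreases_unsafe_mass
    (p q : ℕ) (hp : 1 ≤ p) (hq : 1 ≤ q)
    (u : Fin p → ℝ) (s : Fin q → ℝ)
    (hu : ∀ i, 0 < u i) (hs : ∀ j, 0 < s j)
    (hmaj : ∀ i j, u i < s j)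
    (f : ℝ → ℝ) (hf : StrictConvexOn ℝ (Set.Ici (0 : ℝ)) f)
    (hf0 : f 0 = 0) (hfpos : ∀ x : ℝ, 0 < x → 0 < f x) :
    (∑ i, f (u i)) / ((∑ i, f (u i)) + (∑ j, f (s j)))
      < (∑ i, u i) / ((∑ i, u i) + (∑ j, s j)) := by
  have hpne : Nonempty (Fin p) := ⟨⟨0, hp⟩⟩
  have hqne : Nonempty (Fin q) := ⟨⟨0, hq⟩⟩
  have hA : 0 < ∑ i, f (u i) :=
    Finset.sum_pos (fun i _ => hfpos _ (hu i)) Finset.univ_nonempty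
  have hB : 0 < ∑ j, f (s j) :=
    Finset.sum_pos (fun j _ => hfpos _ (hs j)) Finset.univ_nonempty
  have hU : 0 < ∑ i, u i := Finset.sum_pos (fun i _ => hu i) Finset.univ_nonempty
  have hS : 0 < ∑ j, s j := Finset.sum_pos (fun j _ => hs j) Finset.univ_nonempty
  have slope : ∀ a b : ℝ, 0 < a → a < b → f a * b < f b * a := by
    intro a b ha hab
    have hb : 0 < b := ha.trans hab
    have ht0 : 0 < a / b := div_pos ha hb
    have ht1 : a / b < 1 := (div_lt_one hb).2 hab
    have h := hf.2 (Set.mem_Ici.2 le_rfl) (Set.mem_Ici.2 hb.le) hb.ne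
      (by linarith : (0:ℝ) < 1 - a / b) ht0 (by ring)
    simp only [smul_eq_mul, mul_zero, zero_add, hf0] at h
    have h' : f a < a / b * f b := by
      have : a / b * b = a := div_mul_cancel₀ a hb.ne'
      rw [this] at h; linarith
    have := mul_lt_mul_of_pos_right h' hb
    calc f a * b < a / b * f b * b := this
      _ = f b * a := by field_simp
  rw [div_lt_div_iff₀ (by linarith) (by linarith)]
  have key : (∑ i, f (u i)) * (∑ j, s j) < (∑ i, u i) * (∑ j, f (s j)) := by
    rw [Finset.sum_mul_sum, Finset.sum_mul_sum]
    refine Finset.sum_lt_sum_of_nonempty Finset.univ_nonempty fun i _ => ?_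
    refine Finset.sum_lt_sum_of_nonempty Finset.univ_nonempty fun j _ => ?_
    have := slope (u i) (s j) (hu i) (hmaj i j)
    linarith
  nlinarith
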